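/- Let (y_t) in ℝ^n satisfy y_{t+1} = W(y_t + δ_t) with y_1 = 0, where W is a square matrix, and suppose there is a subspace condition e_j^T δ_t = 0 and (W̄ := W − 1 e_j^T) satisfies W̄ 1 = 0, e_j^T W̄ = 0, W^s = W̄^s + 1 e_j^T for s ≥ 1, ρ(W̄) < 1 in the sense that ‖W̄^{s} v‖ ≤ λ^{s}‖v‖ for some 0 < λ < 1 and all v with e_j^T v = 0, and ‖δ_t‖ ≤ (n+1)/t. Then ‖y_{t+1}‖ ≤ (1/(1−λ)) · (1/t) ∑_{s=1}^t (n+1)/s for all t ≥ 1, and consequently ‖y_t‖ = O((log t)/t). -/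

import Mathlib

open Matrix Finset

/-- For the recursion `y_{t+1} = W(y_t + δ_t)`, `y_1 = 0`, with
`e_j^T δ_t = 0`, `W̄ = W − 1 e_j^T` satisfying `W̄1 = 0`, `e_j^T W̄ = 0`,
`W^s = W̄^s + 1 e_j^T`, geometric decay `‖W̄^s v‖ ≤ λ^s ‖v‖` on `{v : e_j^T v = 0}`
with `0 < λ < 1`, and `‖δ_t‖ ≤ (n+1)/t`, we get
`‖y_{t+1}‖ ≤ (1/(1−λ)) (1/t) ∑_{s=1}^t (n+1)/s`, hence `‖y_t‖ = O((log t)/t)`. -/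
theorem stmt_6 (n : ℕ) (W : Matrix (Fin n) (Fin n) ℝ) (j : Fin n)
    (J : Matrix (Fin n) (Fin n) ℝ)
    (hJ : J = Matrix.of fun _ k => if k = j then (1 : ℝ) else 0)
    (y δ : ℕ → EuclideanSpace ℝ (Fin n))
    (hy1 : y 1 = 0)
    (hrec : ∀ t ≥ 1, y (t + 1) = Matrix.toEuclideanLin W (y t + δ t))
    (hδj : ∀ t ≥ 1, δ t j = 0)
    (hW1 : (W - J) *ᵥ (fun _ => (1 : ℝ)) = 0)
    (hejW : (fun k => if k = j then (1 : ℝ) else 0) ᵥ* (W - J) = 0)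
    (hWs : ∀ s : ℕ, 1 ≤ s → W ^ s = (W - J) ^ s + J)
    (lam : ℝ) (hlam0 : 0 < lam) (hlam1 : lam < 1)
    (hdecay : ∀ (s : ℕ) (v : EuclideanSpace ℝ (Fin n)), v j = 0 →
      ‖Matrix.toEuclideanLin ((W - J) ^ s) v‖ ≤ lam ^ s * ‖v‖)
    (hδ : ∀ t ≥ 1, ‖δ t‖ ≤ ((n : ℝ) + 1) / t) :
    (∀ t : ℕ, 1 ≤ t →
      ‖y (t + 1)‖ ≤ (1 / (1 - lam)) * ((1 / (t : ℝ)) * ∑ s ∈ Finset.Icc 1 t, ((n : ℝ) + 1) / s)) ∧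
    (∃ C : ℝ, ∀ t : ℕ, 2 ≤ t → ‖y t‖ ≤ C * Real.log t / t) := by
  have hlam1' : (0:ℝ) < 1 - lam := by linarith
  -- composition lemma
  have hcomp : ∀ (A B : Matrix (Fin n) (Fin n) ℝ) (v : EuclideanSpace ℝ (Fin n)),
      Matrix.toEuclideanLin A (Matrix.toEuclideanLin B v)
        = Matrix.toEuclideanLin (A * B) v := by
    intro A B v
    simp [Matrix.toEuclideanLin_apply, Matrix.mulVec_mulVec]
  -- closed form
  have hclosed : ∀ t : ℕ, 1 ≤ t →
      y (t + 1) = ∑ s ∈ Finset.Icc 1 t, Matrix.toEuclideanLin (W ^ (t + 1 - s)) (δ s) := by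
    intro t ht
    induction t with
    | zero => omega
    | succ t ih =>
      rcases Nat.eq_or_lt_of_le ht with h1 | h1
      · -- t + 1 = 1, i.e. t = 0
        have ht0 : t = 0 := by omega
        subst ht0
        rw [hrec 1 le_rfl, hy1, zero_add]
        simp
      · have ht1 : 1 ≤ t := by omega
        rw [hrec (t+1) (by omega), ih ht1]
        rw [map_add, map_sum]
        rw [Finset.sum_Icc_succ_top (by omega : 1 ≤ t + 1)]
        congr 1
        · apply Finset.sum_congr rfl
          intro s hs
          simp only [Finset.mem_Icc] at hs
          rw [hcomp, show t + 1 + 1 - s = (t + 1 - s) + 1 from by omega, pow_succ']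
        · have : t + 1 + 1 - (t + 1) = 1 := by omega
          rw [this, pow_one]
  -- per-term: J kills δ
  have hJδ : ∀ s : ℕ, 1 ≤ s → Matrix.toEuclideanLin J (δ s) = 0 := by
    intro s hs
    rw [Matrix.toEuclideanLin_apply]
    have : J *ᵥ (WithLp.equiv 2 (Fin n → ℝ)) (δ s) = 0 := by
      funext i
      simp only [hJ, Matrix.mulVec, dotProduct, Matrix.of_apply,
        ite_mul, one_mul, zero_mul, Finset.sum_ite_eq' Finset.univ j]
      simpa using hδj s hs
    rw [show J *ᵥ (δ s).ofLp = 0 from this]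
    simp
  have hterm : ∀ (m s : ℕ), 1 ≤ m → 1 ≤ s →
      ‖Matrix.toEuclideanLin (W ^ m) (δ s)‖ ≤ lam ^ m * (((n:ℝ) + 1) / s) := by
    intro m s hm hs
    have h1 : Matrix.toEuclideanLin (W ^ m) (δ s)
        = Matrix.toEuclideanLin ((W - J) ^ m) (δ s) := by
      rw [hWs m hm, map_add, LinearMap.add_apply, hJδ s hs, add_zero]
    rw [h1]
    calc ‖Matrix.toEuclideanLin ((W - J) ^ m) (δ s)‖
        ≤ lam ^ m * ‖δ s‖ := hdecay m (δ s) (hδj s hs)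
      _ ≤ lam ^ m * (((n:ℝ) + 1) / s) := by
          apply mul_le_mul_of_nonneg_left (hδ s hs) (le_of_lt (pow_pos hlam0 m))
  -- main bound
  have main : ∀ t : ℕ, 1 ≤ t →
      ‖y (t + 1)‖ ≤ (1 / (1 - lam)) * ((1 / (t : ℝ)) * ∑ s ∈ Finset.Icc 1 t, ((n : ℝ) + 1) / s) := by
    intro t ht
    have htR : (0:ℝ) < t := by exact_mod_cast ht
    have step1 : ‖y (t + 1)‖ ≤ ∑ s ∈ Finset.Icc 1 t, lam ^ (t + 1 - s) * (((n:ℝ) + 1) / s) := by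
      rw [hclosed t ht]
      refine (norm_sum_le _ _).trans (Finset.sum_le_sum ?_)
      intro s hs
      simp only [Finset.mem_Icc] at hs
      exact hterm (t + 1 - s) s (by omega) hs.1
    -- Chebyshev
    have hanti : AntivaryOn (fun s : ℕ => lam ^ (t + 1 - s))
        (fun s : ℕ => ((n:ℝ) + 1) / s) (Finset.Icc 1 t) := by
      intro a ha b hb hab
      simp only [Finset.coe_Icc, Set.mem_Icc] at ha hb
      have hn1 : (0:ℝ) < (n:ℝ) + 1 := by positivity
      have haR : (0:ℝ) < a := by exact_mod_cast ha.1
      have hbR : (0:ℝ) < b := by exact_mod_cast hb.1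
      have hab' : ((n:ℝ)+1)/a < ((n:ℝ)+1)/b := hab
      have hba : b < a := by
        by_contra h
        push_neg at h
        have : ((n:ℝ)+1)/b ≤ ((n:ℝ)+1)/a := by
          gcongr
        linarith
      apply pow_le_pow_of_le_one (le_of_lt hlam0) (le_of_lt hlam1)
      omega
    have cheb := hanti.card_mul_sum_le_sum_mul_sum
    rw [Nat.card_Icc] at cheb
    simp only [Nat.add_sub_cancel] at cheb
    -- geometric sum bound
    have hgeom : ∑ s ∈ Finset.Icc 1 t, lam ^ (t + 1 - s) ≤ 1 / (1 - lam) := by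
      have hre : ∑ s ∈ Finset.Icc 1 t, lam ^ (t + 1 - s) = ∑ m ∈ Finset.Icc 1 t, lam ^ m := by
        apply Finset.sum_nbij' (fun s => t + 1 - s) (fun m => t + 1 - m) <;>
          intro a ha <;> simp only [Finset.mem_Icc] at * <;> omega
      rw [hre]
      have hsub : ∑ m ∈ Finset.Icc 1 t, lam ^ m ≤ ∑ m ∈ Finset.range (t+1), lam ^ m := by
        apply Finset.sum_le_sum_of_subset_of_nonneg
        · intro a ha
          simp only [Finset.mem_Icc] at ha
          simp only [Finset.mem_range]
          omega
        · intro a _ _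
          exact le_of_lt (pow_pos hlam0 a)
      refine hsub.trans ?_
      rw [geom_sum_eq (by linarith : lam ≠ 1)]
      have heq : (lam ^ (t+1) - 1) / (lam - 1) = (1 - lam ^ (t+1)) / (1 - lam) := by
        rw [← neg_div_neg_eq]; ring_nf
      rw [heq]
      have hp : 0 < lam ^ (t+1) := pow_pos hlam0 _
      gcongr
      linarith
    have hgsum : (0:ℝ) ≤ ∑ s ∈ Finset.Icc 1 t, ((n:ℝ) + 1) / s := by
      apply Finset.sum_nonneg
      intro s hs
      simp only [Finset.mem_Icc] at hs
      have : (0:ℝ) < s := by exact_mod_cast hs.1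
      positivity
    have key : (t:ℝ) * ∑ s ∈ Finset.Icc 1 t, lam ^ (t + 1 - s) * (((n:ℝ) + 1) / s)
        ≤ (1 / (1 - lam)) * ∑ s ∈ Finset.Icc 1 t, ((n:ℝ) + 1) / s := by
      refine cheb.trans ?_
      exact mul_le_mul_of_nonneg_right hgeom hgsum
    calc ‖y (t + 1)‖ ≤ ∑ s ∈ Finset.Icc 1 t, lam ^ (t + 1 - s) * (((n:ℝ) + 1) / s) := step1
      _ ≤ (1 / (t:ℝ)) * ((1 / (1 - lam)) * ∑ s ∈ Finset.Icc 1 t, ((n:ℝ) + 1) / s) := by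
          rw [one_div, inv_mul_eq_div, le_div_iff₀ htR, mul_comm]
          exact key
      _ = (1 / (1 - lam)) * ((1 / (t : ℝ)) * ∑ s ∈ Finset.Icc 1 t, ((n:ℝ) + 1) / s) := by ring
  refine ⟨main, ?_⟩
  -- Part 2
  refine ⟨(1 / (1 - lam)) * (((n:ℝ) + 1) * (2 * (1 + 1 / Real.log 2))), ?_⟩
  intro t ht
  set m := t - 1 with hm
  have hmt : t = m + 1 := by omega
  have hm1 : 1 ≤ m := by omega
  have hmR : (0:ℝ) < m := by exact_mod_cast hm1
  have htR : (0:ℝ) < t := by positivity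
  have hlog2 : (0:ℝ) < Real.log 2 := Real.log_pos (by norm_num)
  have hlogt : Real.log 2 ≤ Real.log t := by
    apply Real.log_le_log (by norm_num)
    exact_mod_cast ht
  have hlogt0 : (0:ℝ) < Real.log t := lt_of_lt_of_le hlog2 hlogt
  -- harmonic bound
  have hharm : ∑ s ∈ Finset.Icc 1 m, ((n:ℝ) + 1) / s ≤ ((n:ℝ) + 1) * (1 + Real.log m) := by
    have h1 : ∑ s ∈ Finset.Icc 1 m, ((n:ℝ) + 1) / s
        = ((n:ℝ) + 1) * ∑ s ∈ Finset.Icc 1 m, ((s:ℝ))⁻¹ := by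
      rw [Finset.mul_sum]
      apply Finset.sum_congr rfl
      intro s _
      rw [div_eq_mul_inv]
    rw [h1]
    apply mul_le_mul_of_nonneg_left _ (by positivity)
    have h2 : (harmonic m : ℝ) = ∑ s ∈ Finset.Icc 1 m, ((s:ℝ))⁻¹ := by
      rw [harmonic]
      push_cast
      apply Finset.sum_nbij' (fun i => i + 1) (fun s => s - 1) <;>
        intro a ha <;> simp only [Finset.mem_Icc, Finset.mem_range] at * <;>
        first
          | omega
          | (push_cast; ring)
    rw [← h2]
    exact harmonic_le_one_add_log m
  have hmain := main m hm1
  rw [← hmt] at hmain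
  have hbound : ‖y t‖ ≤ (1 / (1 - lam)) * ((1 / (m:ℝ)) * (((n:ℝ) + 1) * (1 + Real.log m))) := by
    refine hmain.trans ?_
    apply mul_le_mul_of_nonneg_left _ (by positivity)
    apply mul_le_mul_of_nonneg_left hharm (by positivity)
  refine hbound.trans ?_
  -- now pure arithmetic
  have hlogm : Real.log m ≤ Real.log t := by
    apply Real.log_le_log hmR
    rw [hmt]; push_cast; linarith
  have h1log : 1 + Real.log m ≤ (1 + 1 / Real.log 2) * Real.log t := by
    have : (1:ℝ) ≤ Real.log t / Real.log 2 := by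
      rw [le_div_iff₀ hlog2]; linarith
    have h2 : (1 + 1 / Real.log 2) * Real.log t = Real.log t + Real.log t / Real.log 2 := by
      field_simp
    rw [h2]
    linarith
  have hmR1 : (1:ℝ) ≤ m := by exact_mod_cast hm1
  have hinv : 1 / (m:ℝ) ≤ 2 / t := by
    rw [div_le_div_iff₀ hmR htR]
    rw [hmt]; push_cast; linarith
  have hfin : (1 / (m:ℝ)) * (((n:ℝ) + 1) * (1 + Real.log m))
      ≤ (((n:ℝ) + 1) * (2 * (1 + 1 / Real.log 2))) * Real.log t / t := by
    have hA : (0:ℝ) ≤ 1 + Real.log m := by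
      have : (0:ℝ) ≤ Real.log m := Real.log_natCast_nonneg m
      linarith
    calc (1 / (m:ℝ)) * (((n:ℝ) + 1) * (1 + Real.log m))
        ≤ (2 / (t:ℝ)) * (((n:ℝ) + 1) * (1 + Real.log m)) := by
          apply mul_le_mul_of_nonneg_right hinv (by positivity)
      _ ≤ (2 / (t:ℝ)) * (((n:ℝ) + 1) * ((1 + 1 / Real.log 2) * Real.log t)) := by
          apply mul_le_mul_of_nonneg_left _ (by positivity)
          apply mul_le_mul_of_nonneg_left h1log (by positivity)
      _ = (((n:ℝ) + 1) * (2 * (1 + 1 / Real.log 2))) * Real.log t / t := by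
          field_simp
  calc (1 / (1 - lam)) * ((1 / (m:ℝ)) * (((n:ℝ) + 1) * (1 + Real.log m)))
      ≤ (1 / (1 - lam)) * ((((n:ℝ) + 1) * (2 * (1 + 1 / Real.log 2))) * Real.log t / t) := by
        apply mul_le_mul_of_nonneg_left hfin (by positivity)
    _ = (1 / (1 - lam)) * (((n:ℝ) + 1) * (2 * (1 + 1 / Real.log 2))) * Real.log t / t := by
        ring
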